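/- Let σ be a weight function with σ(0) = 0 and t = o(σ(t)) as t → ∞, and let γ̄(σ) < 1, where γ̄(σ) := inf{γ > 0 : ∃ A > 1 with liminf_{t→∞} σ(A^γ t)/σ(t) > A}. Then 1 − γ̄(σ) ≤ γ(σ*), where γ(ω) := sup{γ > 0 : ∃ K > 1 with limsup_{t→∞} ω(K^γ t)/ω(t) < K} (and γ(ω) := 0 if no such γ exists). -/

import Mathlib

open Filter

/-- The conjugate weight function `ω*(s) = sup_{t ≥ 0} (s·t − ω(t))`. -/
noncomputable def conj (ω : ℝ → ℝ) (s : ℝ) : ℝ :=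
  sSup ((fun t => s * t - ω t) '' Set.Ici 0)

/-- property (P_{ω,γ}): ∃ K > 1 with limsup_{t→∞} ω(K^γ t)/ω(t) < K. -/
def Pgamma (ω : ℝ → ℝ) (γ : ℝ) : Prop :=
  ∃ K : ℝ, 1 < K ∧ Filter.limsup (fun t : ℝ => ω (K ^ γ * t) / ω t) atTop < K

/-- property (P̄_{ω,γ}): ∃ A > 1 with liminf_{t→∞} ω(A^γ t)/ω(t) > A. -/
def Pbar (ω : ℝ → ℝ) (γ : ℝ) : Prop :=
  ∃ A : ℝ, 1 < A ∧ (A : ℝ) < Filter.liminf (fun t : ℝ => ω (A ^ γ * t) / ω t) atTop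

/-- Growth index γ(ω) := sup{γ > 0 : (P_{ω,γ})} with γ(ω) = 0 if no such γ exists. -/
noncomputable def gammaLower (ω : ℝ → ℝ) : EReal :=
  sSup (insert (0 : EReal) ((fun γ : ℝ => (γ : EReal)) '' {γ : ℝ | 0 < γ ∧ Pgamma ω γ}))

/-- Growth index γ̄(ω) := inf{γ > 0 : (P̄_{ω,γ})} (= +∞ if no such γ exists). -/
noncomputable def gammaUpper (ω : ℝ → ℝ) : EReal :=
  sInf ((fun γ : ℝ => (γ : EReal)) '' {γ : ℝ | 0 < γ ∧ Pbar ω γ})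

section Aux

variable {σ : ℝ → ℝ}

/-- The set defining `conj σ s` is bounded above. -/
lemma conj_bddAbove (hnn : ∀ t : ℝ, 0 ≤ t → 0 ≤ σ t)
    (ho : (fun t : ℝ => t) =o[atTop] σ) (s : ℝ) :
    BddAbove ((fun t => s * t - σ t) '' Set.Ici 0) := by
  have hc : (0:ℝ) < 1 / (|s| + 1) := by positivity
  obtain ⟨T₀, hT₀⟩ := eventually_atTop.mp (ho.def hc)
  set T := max T₀ 0 with hTdef
  have hT0 : (0:ℝ) ≤ T := le_max_right _ _
  refine ⟨|s| * T, ?_⟩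
  rintro x ⟨t, ht, rfl⟩
  simp only [Set.mem_Ici] at ht
  by_cases htT : t ≤ T
  · have h1 : s * t ≤ |s| * T :=
      calc s * t ≤ |s| * t := mul_le_mul_of_nonneg_right (le_abs_self s) ht
        _ ≤ |s| * T := mul_le_mul_of_nonneg_left htT (abs_nonneg s)
    have h2 := hnn t ht
    simp only []
    linarith
  · push_neg at htT
    have h2 := hT₀ t (le_trans (le_max_left _ _) htT.le)
    have hσ : 0 ≤ σ t := hnn t ht
    rw [Real.norm_eq_abs, Real.norm_eq_abs, abs_of_nonneg ht, abs_of_nonneg hσ] at h2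
    have h4 : (|s| + 1) * t ≤ (|s| + 1) * (1 / (|s| + 1) * σ t) :=
      mul_le_mul_of_nonneg_left h2 (by positivity)
    have h5 : (|s| + 1) * (1 / (|s| + 1) * σ t) = σ t := by
      field_simp
    rw [h5] at h4
    have h6 : s * t ≤ |s| * t := mul_le_mul_of_nonneg_right (le_abs_self s) ht
    have h7 : (0:ℝ) ≤ |s| * T := mul_nonneg (abs_nonneg s) hT0
    simp only []
    linarith

lemma conj_ge (hnn : ∀ t : ℝ, 0 ≤ t → 0 ≤ σ t)
    (ho : (fun t : ℝ => t) =o[atTop] σ) (s : ℝ) {t : ℝ} (ht : 0 ≤ t) :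
    s * t - σ t ≤ conj σ s :=
  le_csSup (conj_bddAbove hnn ho s) ⟨t, ht, rfl⟩

lemma conj_nonneg (hnn : ∀ t : ℝ, 0 ≤ t → 0 ≤ σ t)
    (ho : (fun t : ℝ => t) =o[atTop] σ) (h0 : σ 0 = 0) (s : ℝ) :
    0 ≤ conj σ s := by
  have := conj_ge hnn ho s (le_refl (0:ℝ))
  rw [h0] at this
  simpa using this

/-- Eventually `C * s ≤ conj σ s`: the conjugate grows superlinearly. -/
lemma conj_superlinear (hnn : ∀ t : ℝ, 0 ≤ t → 0 ≤ σ t)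
    (ho : (fun t : ℝ => t) =o[atTop] σ) (C : ℝ) :
    ∀ᶠ s in atTop, C * s ≤ conj σ s := by
  set m := max C 0 with hm
  filter_upwards [eventually_ge_atTop (σ (m + 1)), eventually_ge_atTop (0:ℝ)] with s hs hs0
  have h1 : s * (m + 1) - σ (m + 1) ≤ conj σ s :=
    conj_ge hnn ho s (by positivity : (0:ℝ) ≤ m + 1)
  have h2 : C * s ≤ s * (m + 1) - σ (m + 1) := by
    have hCm : C ≤ m := le_max_left _ _
    nlinarith [mul_le_mul_of_nonneg_left hCm hs0]
  linarith

/-- The key analytic step: from `Pbar σ γ` with `0 < γ < 1` derive `Pgamma (conj σ) (1 - γ)`. -/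
lemma key_step (hnn : ∀ t : ℝ, 0 ≤ t → 0 ≤ σ t)
    (htend : Tendsto σ atTop atTop) (h0 : σ 0 = 0)
    (ho : (fun t : ℝ => t) =o[atTop] σ)
    {γ : ℝ} (hγ0 : 0 < γ) (hγ1 : γ < 1) (hP : Pbar σ γ) :
    Pgamma (conj σ) (1 - γ) := by
  obtain ⟨A, hA1, hAlt⟩ := hP
  have hA0 : (0:ℝ) < A := by linarith
  -- extract B with A < B and eventually B * σ t ≤ σ (A^γ * t)
  set f : ℝ → ℝ := fun t => σ (A ^ γ * t) / σ t with hf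
  have hliminf : liminf f atTop = sSup {a | ∀ᶠ t in atTop, a ≤ f t} := liminf_eq
  have hSne : {a | ∀ᶠ t in atTop, a ≤ f t}.Nonempty := by
    by_contra h
    rw [Set.not_nonempty_iff_eq_empty] at h
    rw [hliminf, h, Real.sSup_empty] at hAlt
    linarith
  obtain ⟨B, hBmem, hAB⟩ := exists_lt_of_lt_csSup hSne (by rw [← hliminf]; exact hAlt)
  have hB1 : (1:ℝ) < B := by linarith
  have hB0 : (0:ℝ) < B := by linarith
  set a := A ^ γ with ha
  have ha1 : (1:ℝ) < a := Real.one_lt_rpow_iff_of_pos hA0 |>.mpr (Or.inl ⟨hA1, hγ0⟩)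
  have ha0 : (0:ℝ) < a := by linarith
  have haA : a < A := by
    have : A ^ γ < A ^ (1:ℝ) := (Real.rpow_lt_rpow_left_iff hA1).mpr hγ1
    rwa [Real.rpow_one] at this
  have haB : a < B := lt_trans haA hAB
  -- find T ≥ 0 with the key inequality for t ≥ T
  have hσpos : ∀ᶠ t in atTop, (0:ℝ) < σ t := htend.eventually_gt_atTop 0
  obtain ⟨T, hT⟩ := eventually_atTop.mp
    ((hBmem.and hσpos).and (eventually_ge_atTop (0:ℝ)))
  have hT0 : (0:ℝ) ≤ T := (hT T le_rfl).2
  have hkey : ∀ t, T ≤ t → B * σ t ≤ σ (a * t) := by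
    intro t ht
    obtain ⟨⟨h1, h2⟩, _⟩ := hT t ht
    rw [hf] at h1
    calc B * σ t ≤ σ (A ^ γ * t) / σ t * σ t :=
          mul_le_mul_of_nonneg_right h1 (le_of_lt h2)
      _ = σ (a * t) := by field_simp; rw [ha, mul_comm]
  -- set up K
  have h1γ : (0:ℝ) < 1 - γ := by linarith
  set lam := B / a with hlam
  have hlam1 : (1:ℝ) < lam := (one_lt_div ha0).mpr haB
  have hlam0 : (0:ℝ) < lam := by linarith
  set K := lam ^ (1 / (1 - γ)) with hK
  have hK1 : (1:ℝ) < K :=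
    Real.one_lt_rpow_iff_of_pos hlam0 |>.mpr (Or.inl ⟨hlam1, by positivity⟩)
  have hKpow : K ^ (1 - γ) = lam := by
    rw [hK, ← Real.rpow_mul hlam0.le, one_div_mul_cancel (ne_of_gt h1γ), Real.rpow_one]
  have hBK : B < K := by
    have h1 : a < B ^ γ := by
      calc a = A ^ γ := ha
        _ < B ^ γ := Real.rpow_lt_rpow hA0.le hAB hγ0
    have h2 : B ^ (1 - γ) < lam := by
      have hB' : B = B ^ (1 - γ) * B ^ γ := by
        rw [← Real.rpow_add hB0, sub_add_cancel, Real.rpow_one]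
      have hpos : (0:ℝ) < B ^ (1 - γ) := Real.rpow_pos_of_pos hB0 _
      rw [hlam, lt_div_iff₀ ha0]
      calc B ^ (1 - γ) * a < B ^ (1 - γ) * B ^ γ :=
            mul_lt_mul_of_pos_left h1 hpos
        _ = B := hB'.symm
    calc B = (B ^ (1 - γ)) ^ (1 / (1 - γ)) := by
          rw [← Real.rpow_mul hB0.le, mul_one_div_cancel (ne_of_gt h1γ), Real.rpow_one]
      _ < lam ^ (1 / (1 - γ)) :=
          Real.rpow_lt_rpow (Real.rpow_pos_of_pos hB0 _).le h2 (by positivity)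
      _ = K := hK.symm
  -- main eventual estimate
  have hmain : ∀ᶠ s in atTop, conj σ (lam * s) ≤ B * conj σ s := by
    filter_upwards [conj_superlinear hnn ho T, eventually_ge_atTop (0:ℝ)] with s hTs hs0
    show sSup ((fun t => lam * s * t - σ t) '' Set.Ici 0) ≤ B * conj σ s
    have hne : ((fun t => lam * s * t - σ t) '' Set.Ici 0).Nonempty :=
      ⟨lam * s * 0 - σ 0, ⟨0, Set.self_mem_Ici, rfl⟩⟩
    apply csSup_le hne
    rintro x ⟨t, ht, rfl⟩
    simp only [Set.mem_Ici] at ht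
    by_cases htT : t ≤ a * T
    · -- small t
      have h1 : lam * s * t - σ t ≤ lam * s * (a * T) := by
        have := hnn t ht
        have h2 : lam * s * t ≤ lam * s * (a * T) :=
          mul_le_mul_of_nonneg_left htT (by positivity)
        linarith
      have h3 : lam * s * (a * T) = B * (T * s) := by
        rw [hlam]; field_simp
      have h4 : B * (T * s) ≤ B * conj σ s :=
        mul_le_mul_of_nonneg_left hTs hB0.le
      calc lam * s * t - σ t ≤ lam * s * (a * T) := h1
        _ = B * (T * s) := h3
        _ ≤ B * conj σ s := h4
    · -- large t
      push_neg at htT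
      set u := t / a with hu
      have huT : T ≤ u := by
        rw [hu, le_div_iff₀ ha0]
        nlinarith
      have hu0 : 0 ≤ u := le_trans hT0 huT
      have hau : a * u = t := by
        rw [hu]; field_simp
      have h1 : lam * s * t - σ t = B * (s * u - σ u) + B * σ u - σ (a * u) := by
        rw [hau, hlam, hu]; field_simp; ring
      have h2 : B * σ u ≤ σ (a * u) := hkey u huT
      have h3 : s * u - σ u ≤ conj σ s := conj_ge hnn ho s hu0
      calc lam * s * t - σ t = B * (s * u - σ u) + (B * σ u - σ (a * u)) := by
            rw [h1]; ring
        _ ≤ B * conj σ s + 0 := by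
            have := mul_le_mul_of_nonneg_left h3 hB0.le
            linarith
        _ = B * conj σ s := by ring
  -- ratio eventually ≤ B
  have hratio : ∀ᶠ s in atTop, conj σ (K ^ (1 - γ) * s) / conj σ s ≤ B := by
    filter_upwards [hmain, conj_superlinear hnn ho 1, eventually_gt_atTop (0:ℝ)]
      with s h1 h2 hs0
    have hcpos : 0 < conj σ s := lt_of_lt_of_le (by linarith) h2
    rw [hKpow, div_le_iff₀ hcpos]
    exact h1
  refine ⟨K, hK1, ?_⟩
  have hcob : IsCoboundedUnder (· ≤ ·) atTop
      (fun s : ℝ => conj σ (K ^ (1 - γ) * s) / conj σ s) :=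
    isCoboundedUnder_le_of_le atTop fun s =>
      div_nonneg (conj_nonneg hnn ho h0 _) (conj_nonneg hnn ho h0 _)
  exact lt_of_le_of_lt (limsup_le_of_le hcob hratio) hBK

end Aux

/-- For a weight function σ with σ(0) = 0, t = o(σ(t)) and γ̄(σ) < 1, one has
1 − γ̄(σ) ≤ γ(σ*). -/
theorem stmt7 (σ : ℝ → ℝ)
    (hnn : ∀ t : ℝ, 0 ≤ t → 0 ≤ σ t) (hmono : MonotoneOn σ (Set.Ici 0))
    (htend : Tendsto σ atTop atTop)
    (h0 : σ 0 = 0) (ho : (fun t : ℝ => t) =o[atTop] σ)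
    (hbar : gammaUpper σ < 1) :
    (1 : EReal) - gammaUpper σ ≤ gammaLower (conj σ) := by
  -- gammaUpper σ is a finite real
  have hg0 : (0 : EReal) ≤ gammaUpper σ := by
    apply le_sInf
    rintro x ⟨γ, hγ, rfl⟩
    show (0 : EReal) ≤ (γ : EReal)
    exact_mod_cast hγ.1.le
  have hgtop : gammaUpper σ ≠ ⊤ := hbar.ne_top
  have hgbot : gammaUpper σ ≠ ⊥ := fun h => by
    rw [h] at hg0; exact absurd hg0 (by simp)
  obtain ⟨r, hr⟩ : ∃ r : ℝ, gammaUpper σ = (r : EReal) :=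
    ⟨(gammaUpper σ).toReal, (EReal.coe_toReal hgtop hgbot).symm⟩
  -- gammaLower (conj σ)
  have hL0 : (0 : EReal) ≤ gammaLower (conj σ) := le_sSup (Set.mem_insert _ _)
  rcases eq_or_ne (gammaLower (conj σ)) ⊤ with hLtop | hLtop
  · rw [hLtop]; exact le_top
  have hLbot : gammaLower (conj σ) ≠ ⊥ := fun h => by
    rw [h] at hL0; exact absurd hL0 (by simp)
  obtain ⟨l, hl⟩ : ∃ l : ℝ, gammaLower (conj σ) = (l : EReal) :=
    ⟨(gammaLower (conj σ)).toReal, (EReal.coe_toReal hLtop hLbot).symm⟩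
  have hl0 : (0:ℝ) ≤ l := by
    rw [hl] at hL0; exact_mod_cast hL0
  -- main claim: every γ in the Pbar set satisfies 1 - γ ≤ l
  have hmain : ∀ γ : ℝ, 0 < γ ∧ Pbar σ γ → 1 - γ ≤ l := by
    rintro γ ⟨hγ0, hγP⟩
    by_cases h1 : γ < 1
    · have hP : Pgamma (conj σ) (1 - γ) := key_step hnn htend h0 ho hγ0 h1 hγP
      have hle : ((1 - γ : ℝ) : EReal) ≤ gammaLower (conj σ) :=
        le_sSup (Set.mem_insert_iff.mpr (Or.inr ⟨1 - γ, ⟨by linarith, hP⟩, rfl⟩))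
      rw [hl] at hle
      exact_mod_cast hle
    · push_neg at h1
      linarith
  -- so 1 - l is a lower bound for the Pbar set, hence 1 - l ≤ r
  have hlb : ((1 - l : ℝ) : EReal) ≤ gammaUpper σ := by
    apply le_sInf
    rintro x ⟨γ, hγ, rfl⟩
    have := hmain γ hγ
    show ((1 - l : ℝ) : EReal) ≤ (γ : EReal)
    exact_mod_cast (by linarith : (1 - l : ℝ) ≤ γ)
  rw [hr] at hlb
  have h1r : (1 - l : ℝ) ≤ r := by exact_mod_cast hlb
  rw [hr, hl]
  have heq : (1 : EReal) - (r : EReal) = ((1 - r : ℝ) : EReal) := by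
    rw [EReal.coe_sub, EReal.coe_one]
  rw [heq]
  exact_mod_cast (by linarith : (1 - r : ℝ) ≤ l)
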